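/- For any positive reals a, b, c and T_max, the function E(T) = a/(T_max − T)² + c·T·(2^{b/T} − 1) attains a unique global minimum on (0, T_max): there exists a unique T* ∈ (0, T_max) such that E(T*) < E(T) for every T ∈ (0, T_max) with T ≠ T*; moreover the derivative of E vanishes at T*. -/

import Mathlib

open Real

lemma stmt6_aux1 (a b c Tmax T : ℝ) (hT0 : 0 < T) (hTm : Tmax - T ≠ 0) :
    HasDerivAt (fun T : ℝ => a / (Tmax - T) ^ 2 + c * T * ((2 : ℝ) ^ (b / T) - 1))
      (2 * a / (Tmax - T) ^ 3 +
        c * ((2 : ℝ) ^ (b / T) * (1 - b * Real.log 2 / T) - 1)) T := by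
  have h1 : HasDerivAt (fun x : ℝ => Tmax - x) (-1) T := by
    simpa using (hasDerivAt_id T).const_sub Tmax
  have h3 : HasDerivAt (fun x : ℝ => a / (Tmax - x) ^ 2)
      ((0 * (Tmax - T) ^ 2 - a * (2 * (Tmax - T) ^ 1 * (-1))) / ((Tmax - T) ^ 2) ^ 2) T :=
    (hasDerivAt_const T a).div (h1.pow 2) (pow_ne_zero 2 hTm)
  have hbt : HasDerivAt (fun x : ℝ => b / x) ((0 * T - b * 1) / T ^ 2) T :=
    (hasDerivAt_const T b).div (hasDerivAt_id T) hT0.ne'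
  have hexp : HasDerivAt (fun x : ℝ => (2 : ℝ) ^ (b / x))
      ((2 : ℝ) ^ (b / T) * Real.log 2 * ((0 * T - b * 1) / T ^ 2)) T :=
    (Real.hasStrictDerivAt_const_rpow two_pos (b / T)).hasDerivAt.comp T hbt
  have hct : HasDerivAt (fun x : ℝ => c * x) (c * 1) T := (hasDerivAt_id T).const_mul c
  have hmul := hct.mul (hexp.sub_const 1)
  refine (h3.add hmul).congr_deriv ?_
  have h2 : (0:ℝ) < (2:ℝ) ^ (b / T) := Real.rpow_pos_of_pos two_pos _
  field_simp
  ring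

lemma stmt6_aux2 (a b c Tmax T : ℝ) (hT0 : 0 < T) (hTm : Tmax - T ≠ 0) :
    HasDerivAt (fun T : ℝ => 2 * a / (Tmax - T) ^ 3 +
        c * ((2 : ℝ) ^ (b / T) * (1 - b * Real.log 2 / T) - 1))
      (6 * a / (Tmax - T) ^ 4 +
        c * ((2 : ℝ) ^ (b / T) * (b * Real.log 2) ^ 2 / T ^ 3)) T := by
  have h1 : HasDerivAt (fun x : ℝ => Tmax - x) (-1) T := by
    simpa using (hasDerivAt_id T).const_sub Tmax
  have h3 : HasDerivAt (fun x : ℝ => 2 * a / (Tmax - x) ^ 3)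
      ((0 * (Tmax - T) ^ 3 - 2 * a * (3 * (Tmax - T) ^ 2 * (-1))) / ((Tmax - T) ^ 3) ^ 2) T :=
    (hasDerivAt_const T (2 * a)).div (h1.pow 3) (pow_ne_zero 3 hTm)
  have hbt : HasDerivAt (fun x : ℝ => b / x) ((0 * T - b * 1) / T ^ 2) T :=
    (hasDerivAt_const T b).div (hasDerivAt_id T) hT0.ne'
  have hexp : HasDerivAt (fun x : ℝ => (2 : ℝ) ^ (b / x))
      ((2 : ℝ) ^ (b / T) * Real.log 2 * ((0 * T - b * 1) / T ^ 2)) T :=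
    (Real.hasStrictDerivAt_const_rpow two_pos (b / T)).hasDerivAt.comp T hbt
  have hL : HasDerivAt (fun x : ℝ => b * Real.log 2 / x)
      ((0 * T - b * Real.log 2 * 1) / T ^ 2) T :=
    (hasDerivAt_const T (b * Real.log 2)).div (hasDerivAt_id T) hT0.ne'
  have hmul := ((hexp.mul (hL.const_sub 1)).sub_const 1).const_mul c
  refine (h3.add hmul).congr_deriv ?_
  field_simp
  ring

lemma stmt6_exp_quad {t : ℝ} (ht : 0 ≤ t) : t ^ 2 / 4 ≤ Real.exp t := by
  have h1 : t / 2 + 1 ≤ Real.exp (t / 2) := Real.add_one_le_exp (t / 2)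
  have h2 : Real.exp t = Real.exp (t / 2) ^ 2 := by
    rw [← Real.exp_nat_mul]; push_cast; ring_nf
  nlinarith [Real.exp_pos (t / 2)]

theorem stmt_6 (a b c Tmax : ℝ) (ha : 0 < a) (hb : 0 < b) (hc : 0 < c)
    (hT : 0 < Tmax) :
    ∃! Tstar : ℝ, Tstar ∈ Set.Ioo (0 : ℝ) Tmax ∧
      (∀ T ∈ Set.Ioo (0 : ℝ) Tmax, T ≠ Tstar →
        a / (Tmax - Tstar) ^ 2 + c * Tstar * ((2 : ℝ) ^ (b / Tstar) - 1) <
          a / (Tmax - T) ^ 2 + c * T * ((2 : ℝ) ^ (b / T) - 1)) ∧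
      deriv (fun T : ℝ => a / (Tmax - T) ^ 2 + c * T * ((2 : ℝ) ^ (b / T) - 1))
        Tstar = 0 := by
  obtain ⟨f, hfdef⟩ : ∃ f : ℝ → ℝ,
      f = fun T : ℝ => a / (Tmax - T) ^ 2 + c * T * ((2 : ℝ) ^ (b / T) - 1) := ⟨_, rfl⟩
  obtain ⟨L, hLdef⟩ : ∃ L : ℝ, L = b * Real.log 2 := ⟨_, rfl⟩
  have hlog2 : (0:ℝ) < Real.log 2 := Real.log_pos one_lt_two
  have hL0 : 0 < L := by rw [hLdef]; positivity
  -- derivatives on Ioo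
  have hd1 : ∀ T ∈ Set.Ioo (0:ℝ) Tmax, HasDerivAt f
      (2 * a / (Tmax - T) ^ 3 + c * ((2 : ℝ) ^ (b / T) * (1 - L / T) - 1)) T := by
    intro T hTi
    rw [hfdef, hLdef]
    exact stmt6_aux1 a b c Tmax T hTi.1 (sub_ne_zero.mpr hTi.2.ne')
  -- f is continuous on Ioo
  have hcont : ContinuousOn f (Set.Ioo 0 Tmax) := fun T hTi =>
    (hd1 T hTi).continuousAt.continuousWithinAt
  -- strict convexity
  have hconv : StrictConvexOn ℝ (Set.Ioo (0:ℝ) Tmax) f := by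
    refine strictConvexOn_of_deriv2_pos (convex_Ioo _ _) hcont ?_
    intro x hx
    rw [interior_Ioo] at hx
    have hEq : deriv f =ᶠ[nhds x]
        (fun T : ℝ => 2 * a / (Tmax - T) ^ 3 + c * ((2 : ℝ) ^ (b / T) * (1 - L / T) - 1)) :=
      Filter.eventuallyEq_of_mem (isOpen_Ioo.mem_nhds hx) (fun y hy => (hd1 y hy).deriv)
    have h2 : deriv^[2] f x = 6 * a / (Tmax - x) ^ 4 +
        c * ((2 : ℝ) ^ (b / x) * L ^ 2 / x ^ 3) := by
      have h0 : deriv^[2] f x = deriv (deriv f) x := rfl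
      rw [h0, hEq.deriv_eq, hLdef,
        (stmt6_aux2 a b c Tmax x hx.1 (sub_ne_zero.mpr hx.2.ne')).deriv]
    rw [h2]
    have hx0 : (0:ℝ) < x := hx.1
    have hxm : (0:ℝ) < Tmax - x := sub_pos.mpr hx.2
    have hr : (0:ℝ) < (2 : ℝ) ^ (b / x) := Real.rpow_pos_of_pos two_pos _
    positivity
  -- second term of f is nonnegative on Ioo
  have hsecond : ∀ T ∈ Set.Ioo (0:ℝ) Tmax, 0 ≤ c * T * ((2 : ℝ) ^ (b / T) - 1) := by
    intro T hTi
    have h1 : (1:ℝ) ≤ (2 : ℝ) ^ (b / T) := by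
      have := Real.rpow_le_rpow_of_exponent_le (one_le_two)
        (le_of_lt (div_pos hb hTi.1) : (0:ℝ) ≤ b / T)
      simpa using this
    have := mul_pos hc hTi.1
    nlinarith
  -- lower bound near 0
  have hlow : ∀ T ∈ Set.Ioo (0:ℝ) Tmax, c * L ^ 2 / (4 * T) - c * Tmax ≤ f T := by
    intro T hTi
    have hT0 : (0:ℝ) < T := hTi.1
    have hrw : (2 : ℝ) ^ (b / T) = Real.exp (Real.log 2 * (b / T)) := by
      rw [Real.rpow_def_of_pos two_pos]
    have hq : (Real.log 2 * (b / T)) ^ 2 / 4 ≤ (2 : ℝ) ^ (b / T) := by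
      rw [hrw]
      exact stmt6_exp_quad (by positivity)
    have hfirst : (0:ℝ) ≤ a / (Tmax - T) ^ 2 := by positivity
    have hkey : c * L ^ 2 / (4 * T) - c * Tmax ≤ c * T * ((2 : ℝ) ^ (b / T) - 1) := by
      have h1 : c * T * ((Real.log 2 * (b / T)) ^ 2 / 4 - 1) ≤
          c * T * ((2 : ℝ) ^ (b / T) - 1) := by
        have := mul_pos hc hT0
        nlinarith
      have h2 : c * L ^ 2 / (4 * T) - c * Tmax ≤
          c * T * ((Real.log 2 * (b / T)) ^ 2 / 4 - 1) := by
        rw [hLdef]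
        have hTm : T ≤ Tmax := hTi.2.le
        have heq : c * T * ((Real.log 2 * (b / T)) ^ 2 / 4 - 1) =
            c * (b * Real.log 2) ^ 2 / (4 * T) - c * T := by
          field_simp
        rw [heq]
        nlinarith
      linarith
    rw [hfdef]
    dsimp only
    linarith
  -- setup of the compact interval
  obtain ⟨t0, ht0def⟩ : ∃ t0 : ℝ, t0 = Tmax / 2 := ⟨_, rfl⟩
  have ht0 : t0 ∈ Set.Ioo (0:ℝ) Tmax := by rw [ht0def]; constructor <;> [positivity; linarith]
  obtain ⟨M, hMdef⟩ : ∃ M : ℝ, M = f t0 := ⟨_, rfl⟩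
  have hM0 : 0 < M := by
    have h1 : 0 < a / (Tmax - t0) ^ 2 := by
      have : (0:ℝ) < Tmax - t0 := by rw [ht0def]; linarith
      positivity
    have h2 := hsecond t0 ht0
    rw [hMdef, hfdef]
    dsimp only
    linarith
  obtain ⟨K, hKdef⟩ : ∃ K : ℝ, K = M + c * Tmax + 1 := ⟨_, rfl⟩
  have hK0 : 0 < K := by rw [hKdef]; positivity
  obtain ⟨e1, he1def⟩ : ∃ e1 : ℝ, e1 = min t0 (c * L ^ 2 / (4 * K)) := ⟨_, rfl⟩
  have he1pos : 0 < e1 := by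
    rw [he1def]
    refine lt_min (ht0.1) (by positivity)
  have he1t0 : e1 ≤ t0 := by rw [he1def]; exact min_le_left _ _
  -- near 0, f is big
  have hbig0 : ∀ T ∈ Set.Ioo (0:ℝ) Tmax, T ≤ e1 → M < f T := by
    intro T hTi hTe
    have hT0 : (0:ℝ) < T := hTi.1
    have h1 : c * L ^ 2 / (4 * T) - c * Tmax ≤ f T := hlow T hTi
    have h2 : K ≤ c * L ^ 2 / (4 * T) := by
      rw [le_div_iff₀ (by positivity)]
      have h3 : e1 ≤ c * L ^ 2 / (4 * K) := by rw [he1def]; exact min_le_right _ _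
      rw [le_div_iff₀ (by positivity)] at h3
      nlinarith
    rw [hKdef] at h2
    linarith
  obtain ⟨e2, he2def⟩ : ∃ e2 : ℝ, e2 = min (Tmax - t0) (Real.sqrt (a / (M + 1))) := ⟨_, rfl⟩
  have he2pos : 0 < e2 := by
    rw [he2def]
    refine lt_min (by rw [ht0def]; linarith) (Real.sqrt_pos.mpr (by positivity))
  have he2t0 : e2 ≤ Tmax - t0 := by rw [he2def]; exact min_le_left _ _
  -- near Tmax, f is big
  have hbigT : ∀ T ∈ Set.Ioo (0:ℝ) Tmax, Tmax - e2 ≤ T → M < f T := by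
    intro T hTi hTe
    have hTm : 0 < Tmax - T := sub_pos.mpr hTi.2
    have hTm2 : Tmax - T ≤ e2 := by linarith
    have hsq : (Tmax - T) ^ 2 ≤ a / (M + 1) := by
      have h1 : e2 ≤ Real.sqrt (a / (M + 1)) := by rw [he2def]; exact min_le_right _ _
      have h2 : (Tmax - T) ^ 2 ≤ Real.sqrt (a / (M + 1)) ^ 2 :=
        pow_le_pow_left₀ hTm.le (le_trans hTm2 h1) 2
      rwa [Real.sq_sqrt (by positivity : (0:ℝ) ≤ a / (M + 1))] at h2
    have h3 : M + 1 ≤ a / (Tmax - T) ^ 2 := by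
      rw [le_div_iff₀ (by positivity)]
      rw [le_div_iff₀ (by positivity : (0:ℝ) < M + 1)] at hsq
      nlinarith
    have h4 := hsecond T hTi
    rw [hfdef]
    dsimp only
    linarith
  -- the compact interval
  have ht0mem : t0 ∈ Set.Icc e1 (Tmax - e2) := ⟨he1t0, by linarith⟩
  have hsub : Set.Icc e1 (Tmax - e2) ⊆ Set.Ioo (0:ℝ) Tmax := by
    intro x hx
    exact ⟨lt_of_lt_of_le he1pos hx.1, lt_of_le_of_lt hx.2 (by linarith)⟩
  obtain ⟨Tstar, hTsmem, hminOn⟩ := isCompact_Icc.exists_isMinOn ⟨t0, ht0mem⟩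
    (hcont.mono hsub)
  have hTsIoo : Tstar ∈ Set.Ioo (0:ℝ) Tmax := hsub hTsmem
  have hTsM : f Tstar ≤ M := hMdef ▸ hminOn ht0mem
  -- global min on Ioo
  have hglob : ∀ T ∈ Set.Ioo (0:ℝ) Tmax, f Tstar ≤ f T := by
    intro T hTi
    rcases le_or_gt T e1 with h | h
    · exact le_trans hTsM (hbig0 T hTi h).le
    rcases le_or_gt (Tmax - e2) T with h' | h'
    · exact le_trans hTsM (hbigT T hTi h').le
    · exact hminOn ⟨h.le, h'.le⟩
  have hminIoo : IsMinOn f (Set.Ioo (0:ℝ) Tmax) Tstar := fun T hTi => hglob T hTi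
  -- strict minimum
  have hstrict : ∀ T ∈ Set.Ioo (0:ℝ) Tmax, T ≠ Tstar → f Tstar < f T := by
    intro T hTi hne
    by_contra hcon
    push_neg at hcon
    have hminT : IsMinOn f (Set.Ioo (0:ℝ) Tmax) T := fun y hy =>
      le_trans hcon (hglob y hy)
    exact hne (hconv.eq_of_isMinOn hminT hminIoo hTi hTsIoo)
  -- derivative zero
  have hderiv0 : deriv f Tstar = 0 :=
    (hminIoo.isLocalMin (isOpen_Ioo.mem_nhds hTsIoo)).deriv_eq_zero
  refine ⟨Tstar, ⟨hTsIoo, ?_, ?_⟩, ?_⟩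
  · intro T hTi hne
    simpa [hfdef] using hstrict T hTi hne
  · rw [← hfdef]; exact hderiv0
  · rintro y ⟨hy, hystrict, -⟩
    by_contra hne
    have h1 : f y < f Tstar := by
      have := hystrict Tstar hTsIoo (fun h => hne h.symm)
      rw [hfdef]
      dsimp only
      exact this
    exact absurd (hstrict y hy hne) (not_lt.mpr h1.le)
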